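/- Let R be a staircase region in ℤ² bounded by two monotone NE lattice paths from (0,0) to (a,b). Let A, B ∈ R lie on the same horizontal line with A to the left of B (a₂ = b₂, a₁ ≤ b₁), and let C, D ∈ R lie on a common vertical line at height ≥ a₂, with C below D. Write K(X,Y) for the number of monotone NE lattice paths from X to Y inside R. If b₁ - a₁ > 0, then K(A + e₁, C) · K(B - e₁, D) ≥ K(A, C) · K(B, D), where e₁ = (1,0). -/
import Mathlib


/-- Number of lattice steps of a monotone NE path from `A` to `B`. -/
def steps (A B : ℤ × ℤ) : ℕ := ((B.1 - A.1) + (B.2 - A.2)).toNat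

/-- `p : ℕ → ℤ × ℤ` is a monotone NE lattice path from `A` to `B`. -/
def IsNEPath (A B : ℤ × ℤ) (p : ℕ → ℤ × ℤ) : Prop :=
  p 0 = A ∧
  (∀ t, t < steps A B → p (t + 1) = p t + (1, 0) ∨ p (t + 1) = p t + (0, 1)) ∧
  (∀ t, steps A B ≤ t → p t = B)

/-- The set of lattice points weakly between the NE lattice paths `lower` and
`upper` (each with `n` steps). -/
def staircaseRegion (n : ℕ) (lower upper : ℕ → ℤ × ℤ) : Set (ℤ × ℤ) :=
  {v | (∃ t ≤ n, (lower t).1 = v.1 ∧ (lower t).2 ≤ v.2) ∧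
       (∃ t ≤ n, (upper t).1 = v.1 ∧ v.2 ≤ (upper t).2)}

/-- The number of monotone NE lattice paths from `A` to `B` staying inside `R`. -/
noncomputable def pathCount (R : Set (ℤ × ℤ)) (A B : ℤ × ℤ) : ℕ :=
  Nat.card {p : ℕ → ℤ × ℤ // IsNEPath A B p ∧ ∀ t, p t ∈ R}

section PathBasics

variable {A B : ℤ × ℤ} {p : ℕ → ℤ × ℤ}

lemma steps_def (A B : ℤ × ℤ) : steps A B = ((B.1 - A.1) + (B.2 - A.2)).toNat := rfl

lemma step_cases (hp : IsNEPath A B p) (t : ℕ) :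
    p (t+1) = p t + (1,0) ∨ p (t+1) = p t + (0,1) ∨ p (t+1) = p t := by
  rcases lt_or_ge t (steps A B) with h|h
  · rcases hp.2.1 t h with h'|h'
    · exact Or.inl h'
    · exact Or.inr (Or.inl h')
  · exact Or.inr (Or.inr (by rw [hp.2.2 t h, hp.2.2 (t+1) (le_trans h (Nat.le_succ t))]))

lemma fst_mono (hp : IsNEPath A B p) : Monotone fun t => (p t).1 := by
  apply monotone_nat_of_le_succ
  intro t
  rcases step_cases hp t with h|h|h <;> simp [h, Prod.fst_add] <;> omega

lemma snd_mono (hp : IsNEPath A B p) : Monotone fun t => (p t).2 := by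
  apply monotone_nat_of_le_succ
  intro t
  rcases step_cases hp t with h|h|h <;> simp [h, Prod.snd_add] <;> omega

lemma fst_succ_le (hp : IsNEPath A B p) (t : ℕ) : (p (t+1)).1 ≤ (p t).1 + 1 := by
  rcases step_cases hp t with h|h|h <;> simp [h, Prod.fst_add] <;> omega

lemma start_fst_le (hp : IsNEPath A B p) (t : ℕ) : A.1 ≤ (p t).1 := by
  have := fst_mono hp (Nat.zero_le t)
  simpa [hp.1] using this

lemma start_snd_le (hp : IsNEPath A B p) (t : ℕ) : A.2 ≤ (p t).2 := by
  have := snd_mono hp (Nat.zero_le t)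
  simpa [hp.1] using this

lemma path_end (hp : IsNEPath A B p) : p (steps A B) = B := hp.2.2 _ le_rfl

/-- Discrete intermediate value theorem. -/
lemma int_ivt {f : ℕ → ℤ} (hmono : Monotone f) (hstep : ∀ t, f (t+1) ≤ f t + 1)
    {t₀ t₁ : ℕ} (h01 : t₀ ≤ t₁) {x : ℤ} (h0 : f t₀ ≤ x) (h1 : x ≤ f t₁) :
    ∃ t, t₀ ≤ t ∧ t ≤ t₁ ∧ f t = x := by
  classical
  set tm := Nat.findGreatest (fun t => f t ≤ x) t₁ with htm
  have hspec : f tm ≤ x := Nat.findGreatest_spec (P := fun t => f t ≤ x) h01 h0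
  have hlo : t₀ ≤ tm := Nat.le_findGreatest (P := fun t => f t ≤ x) h01 h0
  have hhi : tm ≤ t₁ := Nat.findGreatest_le t₁
  rcases eq_or_lt_of_le hhi with heq|hlt
  · exact ⟨tm, hlo, hhi, le_antisymm hspec (heq ▸ h1)⟩
  · have hng : ¬ (f (tm + 1) ≤ x) :=
      Nat.findGreatest_is_greatest (P := fun t => f t ≤ x) (n := t₁) (k := tm + 1)
        (by omega) (by omega)
    have h2 := hstep tm
    have h3 : f tm ≤ f (tm+1) := hmono (Nat.le_succ tm)
    exact ⟨tm, hlo, hhi, by omega⟩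

end PathBasics

section Count

variable {R : Set (ℤ × ℤ)} {A B : ℤ × ℤ}

instance pathsFinite (R : Set (ℤ × ℤ)) (A B : ℤ × ℤ) :
    Finite {p : ℕ → ℤ × ℤ // IsNEPath A B p ∧ ∀ t, p t ∈ R} := by
  classical
  apply Finite.of_injective
    (f := fun q : {p : ℕ → ℤ × ℤ // IsNEPath A B p ∧ ∀ t, p t ∈ R} =>
      (fun i : Fin (steps A B) => decide (q.1 (i+1) = q.1 i + (1,0))))
  intro q q' h
  apply Subtype.ext
  funext t
  induction t with
  | zero => rw [q.2.1.1, q'.2.1.1]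
  | succ t ih =>
    rcases lt_or_ge t (steps A B) with hlt|hge
    · have hb := congrFun h ⟨t, hlt⟩
      simp only [decide_eq_decide] at hb
      rcases q.2.1.2.1 t hlt with h1|h1
      · have h2 : q'.1 (t+1) = q'.1 t + (1,0) := hb.mp h1
        rw [h1, h2, ih]
      · have h2 : ¬ (q.1 (t+1) = q.1 t + (1,0)) := by
          rw [h1]
          intro hcon
          have := congrArg Prod.fst hcon
          simp [Prod.fst_add] at this
        have h2' : ¬ (q'.1 (t+1) = q'.1 t + (1,0)) := fun hc => h2 (hb.mpr hc)
        have h3 : q'.1 (t+1) = q'.1 t + (0,1) := (q'.2.1.2.1 t hlt).resolve_left h2'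
        rw [h1, h3, ih]
    · rw [q.2.1.2.2 _ (by omega), q'.2.1.2.2 _ (by omega)]

lemma pathCount_eq_zero_of_notMem (hv : A ∉ R) : pathCount R A B = 0 := by
  rw [pathCount, Nat.card_eq_zero]
  left
  exact ⟨fun q => hv (by simpa [q.2.1.1] using q.2.2 0)⟩

lemma pathCount_eq_zero_of_fst_lt (h : B.1 < A.1) : pathCount R A B = 0 := by
  rw [pathCount, Nat.card_eq_zero]
  left
  refine ⟨fun q => ?_⟩
  have h1 := start_fst_le q.2.1 (steps A B)
  rw [path_end q.2.1] at h1
  omega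

lemma pathCount_eq_zero_of_snd_lt (h : B.2 < A.2) : pathCount R A B = 0 := by
  rw [pathCount, Nat.card_eq_zero]
  left
  refine ⟨fun q => ?_⟩
  have h1 := start_snd_le q.2.1 (steps A B)
  rw [path_end q.2.1] at h1
  omega

lemma mem_of_pathCount_ne_zero (h : pathCount R A B ≠ 0) : A ∈ R := by
  by_contra hm
  exact h (pathCount_eq_zero_of_notMem hm)

end Count

section Count2

variable {R : Set (ℤ × ℤ)}

/-- A purely vertical segment inside `R` supports exactly one path. -/
lemma pathCount_vert {v E : ℤ × ℤ} (hx : v.1 = E.1) (hy : v.2 ≤ E.2)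
    (hseg : ∀ ρ, v.2 ≤ ρ → ρ ≤ E.2 → ((v.1, ρ) : ℤ × ℤ) ∈ R) :
    pathCount R v E = 1 := by
  classical
  set n := steps v E with hn
  have hnn : (n : ℤ) = E.2 - v.2 := by
    rw [hn, steps_def, hx]; omega
  set c : ℕ → ℤ × ℤ := fun t => (v.1, min (v.2 + (t : ℤ)) E.2) with hc
  have hc0 : c 0 = v := by
    simp only [hc, Nat.cast_zero, add_zero, min_eq_left hy]
  have hcstep : ∀ t, t < n → c (t+1) = c t + (0,1) := by
    intro t ht
    have ht' : v.2 + (t : ℤ) + 1 ≤ E.2 := by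
      have : (t : ℤ) < (n : ℤ) := by exact_mod_cast ht
      omega
    simp only [hc]
    rw [min_eq_left (by push_cast; omega), min_eq_left (by omega)]
    rw [Prod.mk_add_mk]
    push_cast
    ring_nf
  have hcend : ∀ t, n ≤ t → c t = E := by
    intro t ht
    have ht' : E.2 ≤ v.2 + (t : ℤ) := by
      have : (n : ℤ) ≤ (t : ℤ) := by exact_mod_cast ht
      omega
    simp only [hc]
    rw [min_eq_right ht']
    exact Prod.ext hx rfl
  have hcpath : IsNEPath v E c := ⟨hc0, fun t ht => Or.inr (hcstep t ht), hcend⟩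
  have hcmem : ∀ t, c t ∈ R := by
    intro t
    apply hseg
    · exact le_min (by omega) hy
    · exact min_le_right _ _
  rw [pathCount, Nat.card_eq_one_iff_unique]
  constructor
  · constructor
    intro q q'
    have key : ∀ (w : {p : ℕ → ℤ × ℤ // IsNEPath v E p ∧ ∀ t, p t ∈ R}) (t : ℕ),
        w.1 t = c t := by
      intro w t
      have hstep : ∀ s, s < n → w.1 (s+1) = w.1 s + (0,1) := by
        intro s hs
        rcases w.2.1.2.1 s hs with hE|hN
        · exfalso
          have h1 : (w.1 (s+1)).1 = (w.1 s).1 + 1 := by rw [hE, Prod.fst_add]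
          have h2 : v.1 ≤ (w.1 s).1 := start_fst_le w.2.1 s
          have h3 : (w.1 (s+1)).1 ≤ (w.1 n).1 :=
            fst_mono w.2.1 (by omega : s + 1 ≤ n)
          rw [path_end w.2.1] at h3
          omega
        · exact hN
      induction t with
      | zero => rw [w.2.1.1, hc0]
      | succ t ih =>
        rcases lt_or_ge t n with hlt|hge
        · rw [hstep t hlt, hcstep t hlt, ih]
        · rw [w.2.1.2.2 (t+1) (by omega), hcend (t+1) (by omega)]
    exact Subtype.ext (funext fun t => (key q t).trans (key q' t).symm)
  · exact ⟨⟨c, hcpath, hcmem⟩⟩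

end Count2

section Split

variable {R : Set (ℤ × ℤ)}

/-- Peeling the first step off a path. -/
def stepEquiv (R : Set (ℤ × ℤ)) (v E w : ℤ × ℤ) (hvR : v ∈ R)
    (hw : w = v + (1,0) ∨ w = v + (0,1)) (hst : steps w E + 1 = steps v E) :
    {q : {p : ℕ → ℤ × ℤ // IsNEPath v E p ∧ ∀ t, p t ∈ R} // q.1 1 = w} ≃
      {p : ℕ → ℤ × ℤ // IsNEPath w E p ∧ ∀ t, p t ∈ R} where
  toFun q := ⟨fun t => q.1.1 (t+1),
    ⟨⟨q.2, fun t ht => q.1.2.1.2.1 (t+1) (by omega),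
      fun t ht => q.1.2.1.2.2 (t+1) (by omega)⟩,
      fun t => q.1.2.2 (t+1)⟩⟩
  invFun p := ⟨⟨fun t => match t with | 0 => v | (t'+1) => p.1 t',
    ⟨⟨rfl, by
        intro t ht
        cases t with
        | zero =>
          show p.1 0 = v + (1,0) ∨ p.1 0 = v + (0,1)
          rw [p.2.1.1]
          exact hw.imp (fun h => h) (fun h => h)
        | succ t' => exact p.2.1.2.1 t' (by omega), by
        intro t ht
        cases t with
        | zero => omega
        | succ t' => exact p.2.1.2.2 t' (by omega)⟩, by
      intro t
      cases t with
      | zero => exact hvR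
      | succ t' => exact p.2.2 t'⟩⟩, p.2.1.1⟩
  left_inv q := by
    apply Subtype.ext
    apply Subtype.ext
    funext t
    cases t with
    | zero => exact (q.1.2.1.1).symm
    | succ t' => rfl
  right_inv p := by
    apply Subtype.ext
    funext t
    rfl

lemma pathCount_split {v E : ℤ × ℤ} (hvR : v ∈ R) (hx : v.1 < E.1) (hy : v.2 ≤ E.2) :
    pathCount R v E = pathCount R (v + (0,1)) E + pathCount R (v + (1,0)) E := by
  classical
  have h1 : 1 ≤ steps v E := by rw [steps_def]; omega
  have hsN : steps (v + (0,1)) E + 1 = steps v E := by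
    simp only [steps_def, Prod.fst_add, Prod.snd_add]
    omega
  have hsE : steps (v + (1,0)) E + 1 = steps v E := by
    simp only [steps_def, Prod.fst_add, Prod.snd_add]
    omega
  have hcard : Nat.card {q : {p : ℕ → ℤ × ℤ // IsNEPath v E p ∧ ∀ t, p t ∈ R} //
        q.1 1 = v + (1,0)} + Nat.card {q : {p : ℕ → ℤ × ℤ // IsNEPath v E p ∧ ∀ t, p t ∈ R} //
        ¬ q.1 1 = v + (1,0)} = pathCount R v E :=
    (Nat.card_sum).symm.trans (Nat.card_congr
      (Equiv.sumCompl (fun q : {p : ℕ → ℤ × ℤ // IsNEPath v E p ∧ ∀ t, p t ∈ R} =>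
        q.1 1 = v + (1,0))))
  have hne : Nat.card {q : {p : ℕ → ℤ × ℤ // IsNEPath v E p ∧ ∀ t, p t ∈ R} //
      ¬ q.1 1 = v + (1,0)} = pathCount R (v + (0,1)) E := by
    have e1 : {q : {p : ℕ → ℤ × ℤ // IsNEPath v E p ∧ ∀ t, p t ∈ R} //
        ¬ q.1 1 = v + (1,0)} ≃ {q : {p : ℕ → ℤ × ℤ // IsNEPath v E p ∧ ∀ t, p t ∈ R} //
        q.1 1 = v + (0,1)} := by
      apply Equiv.subtypeEquivRight
      intro q
      constructor
      · intro h
        have hq1 : q.1 1 = v + (1,0) ∨ q.1 1 = v + (0,1) := by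
          have := q.2.1.2.1 0 h1
          rwa [q.2.1.1] at this
        exact hq1.resolve_left h
      · intro h hcon
        rw [h] at hcon
        have := congrArg Prod.fst hcon
        simp [Prod.fst_add] at this
    exact (Nat.card_congr e1).trans
      (Nat.card_congr (stepEquiv R v E (v + (0,1)) hvR (Or.inr rfl) hsN))
  have heq : Nat.card {q : {p : ℕ → ℤ × ℤ // IsNEPath v E p ∧ ∀ t, p t ∈ R} //
      q.1 1 = v + (1,0)} = pathCount R (v + (1,0)) E :=
    Nat.card_congr (stepEquiv R v E (v + (1,0)) hvR (Or.inl rfl) hsE)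
  rw [← hcard, hne, heq]
  exact Nat.add_comm _ _

end Split

section Dec

open scoped Classical

variable {R : Set (ℤ × ℤ)}

lemma pathCount_dec
    (hconv : ∀ x r ρ s : ℤ, ((x,r) : ℤ×ℤ) ∈ R → ((x,s) : ℤ×ℤ) ∈ R → r ≤ ρ → ρ ≤ s →
      ((x,ρ) : ℤ×ℤ) ∈ R) (E : ℤ × ℤ) :
    ∀ d : ℕ, ∀ x r : ℤ, (E.2 - r).toNat ≤ d → ((x,r) : ℤ×ℤ) ∈ R → x < E.1 → r ≤ E.2 →
    pathCount R (x,r) E =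
      ∑ s ∈ Finset.Icc r E.2, (if ((x,s) : ℤ×ℤ) ∈ R then pathCount R (x+1,s) E else 0) := by
  intro d
  induction d with
  | zero =>
    intro x r hd hvR hx hy
    rcases eq_or_lt_of_le hy with heq|hlt
    · have hsplit := pathCount_split (R := R) (v := (x,r)) (E := E) hvR hx hy
      simp only [Prod.mk_add_mk, add_zero] at hsplit
      have hz : pathCount R (x, r+1) E = 0 :=
        pathCount_eq_zero_of_snd_lt (by simp; omega)
      rw [hsplit, hz, zero_add, ← heq, Finset.Icc_self, Finset.sum_singleton, if_pos hvR]
    · exfalso; omega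
  | succ d ih =>
    intro x r hd hvR hx hy
    have hsplit := pathCount_split (R := R) (v := (x,r)) (E := E) hvR hx hy
    simp only [Prod.mk_add_mk, add_zero] at hsplit
    rcases eq_or_lt_of_le hy with heq|hlt
    · have hz : pathCount R (x, r+1) E = 0 :=
        pathCount_eq_zero_of_snd_lt (by simp; omega)
      rw [hsplit, hz, zero_add, ← heq, Finset.Icc_self, Finset.sum_singleton, if_pos hvR]
    · have hN : pathCount R (x, r+1) E =
          ∑ s ∈ Finset.Icc (r+1) E.2, (if ((x,s) : ℤ×ℤ) ∈ R then pathCount R (x+1,s) E else 0) := by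
        by_cases hm : ((x, r+1) : ℤ×ℤ) ∈ R
        · exact ih x (r+1) (by omega) hm hx (by omega)
        · rw [pathCount_eq_zero_of_notMem hm]
          symm
          apply Finset.sum_eq_zero
          intro s hs
          rw [Finset.mem_Icc] at hs
          rw [if_neg]
          intro hmem
          exact hm (hconv x r (r+1) s hvR hmem (by omega) (by omega))
      have hins : Finset.Icc r E.2 = insert r (Finset.Icc (r+1) E.2) := by
        ext z; simp only [Finset.mem_Icc, Finset.mem_insert]; omega
      rw [hsplit, hN, hins, Finset.sum_insert (by simp only [Finset.mem_Icc]; omega),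
        if_pos hvR]
      exact Nat.add_comm _ _

lemma mul_pathCount_le_deg
    (hconv : ∀ x r ρ s : ℤ, ((x,r) : ℤ×ℤ) ∈ R → ((x,s) : ℤ×ℤ) ∈ R → r ≤ ρ → ρ ≤ s →
      ((x,ρ) : ℤ×ℤ) ∈ R)
    (hmeet : ∀ x₁ x₂ r₁ r₂ : ℤ, ((x₁,r₁) : ℤ×ℤ) ∈ R → ((x₂,r₂) : ℤ×ℤ) ∈ R → x₁ ≤ x₂ →
      r₂ ≤ r₁ → ((x₁,r₂) : ℤ×ℤ) ∈ R)
    (hjoin : ∀ x₁ x₂ r₁ r₂ : ℤ, ((x₁,r₁) : ℤ×ℤ) ∈ R → ((x₂,r₂) : ℤ×ℤ) ∈ R → x₁ ≤ x₂ →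
      r₂ ≤ r₁ → ((x₂,r₁) : ℤ×ℤ) ∈ R)
    {C D : ℤ × ℤ} (hC : C ∈ R) (hD : D ∈ R) (hcol : C.1 = D.1) (hCD : C.2 ≤ D.2)
    (x₁ x₂ r₁ r₂ : ℤ) (hx12 : x₁ ≤ x₂) (hr : r₂ ≤ r₁) (hxC : C.1 ≤ x₁) :
    pathCount R (x₁,r₁) C * pathCount R (x₂,r₂) D ≤
      pathCount R (x₁,r₂) C * pathCount R (x₂,r₁) D := by
  rcases eq_or_lt_of_le hxC with heq|hlt
  · by_cases h1 : ((x₁,r₁) : ℤ×ℤ) ∈ R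
    swap
    · rw [pathCount_eq_zero_of_notMem h1, zero_mul]; exact Nat.zero_le _
    by_cases h2 : ((x₂,r₂) : ℤ×ℤ) ∈ R
    swap
    · rw [pathCount_eq_zero_of_notMem h2, mul_zero]; exact Nat.zero_le _
    by_cases h3 : r₁ ≤ C.2
    swap
    · rw [pathCount_eq_zero_of_snd_lt (by simp; omega), zero_mul]; exact Nat.zero_le _
    by_cases h4 : x₂ ≤ D.1
    swap
    · rw [pathCount_eq_zero_of_fst_lt (show D.1 < (x₂,r₂).1 by simp; omega), mul_zero]
      exact Nat.zero_le _
    have hx2 : x₂ = D.1 := by omega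
    have m1 : ((x₁,r₂) : ℤ×ℤ) ∈ R := hmeet _ _ _ _ h1 h2 hx12 hr
    have m2 : ((x₂,r₁) : ℤ×ℤ) ∈ R := hjoin _ _ _ _ h1 h2 hx12 hr
    have hCx : ((x₁, C.2) : ℤ×ℤ) ∈ R := by rw [← heq]; exact hC
    have hDx : ((x₂, D.2) : ℤ×ℤ) ∈ R := by rw [hx2]; exact hD
    have v1 : pathCount R (x₁,r₁) C = 1 :=
      pathCount_vert (by simp [← heq]) (by simpa using h3)
        (fun ρ hρ1 hρ2 => hconv x₁ r₁ ρ C.2 h1 hCx hρ1 hρ2)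
    have v2 : pathCount R (x₂,r₂) D = 1 :=
      pathCount_vert (by simp [hx2]) (by simp; omega)
        (fun ρ hρ1 hρ2 => hconv x₂ r₂ ρ D.2 h2 hDx hρ1 hρ2)
    have v3 : pathCount R (x₁,r₂) C = 1 :=
      pathCount_vert (by simp [← heq]) (by simp; omega)
        (fun ρ hρ1 hρ2 => hconv x₁ r₂ ρ C.2 m1 hCx hρ1 hρ2)
    have v4 : pathCount R (x₂,r₁) D = 1 :=
      pathCount_vert (by simp [hx2]) (by simp; omega)
        (fun ρ hρ1 hρ2 => hconv x₂ r₁ ρ D.2 m2 hDx hρ1 hρ2)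
    rw [v1, v2, v3, v4]
  · rw [pathCount_eq_zero_of_fst_lt (show C.1 < (x₁,r₁).1 by simp; omega), zero_mul]
    exact Nat.zero_le _

end Dec

section Main

open scoped Classical

variable {R : Set (ℤ × ℤ)}

lemma mul_pathCount_le
    (hconv : ∀ x r ρ s : ℤ, ((x,r) : ℤ×ℤ) ∈ R → ((x,s) : ℤ×ℤ) ∈ R → r ≤ ρ → ρ ≤ s →
      ((x,ρ) : ℤ×ℤ) ∈ R)
    (hmeet : ∀ x₁ x₂ r₁ r₂ : ℤ, ((x₁,r₁) : ℤ×ℤ) ∈ R → ((x₂,r₂) : ℤ×ℤ) ∈ R → x₁ ≤ x₂ →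
      r₂ ≤ r₁ → ((x₁,r₂) : ℤ×ℤ) ∈ R)
    (hjoin : ∀ x₁ x₂ r₁ r₂ : ℤ, ((x₁,r₁) : ℤ×ℤ) ∈ R → ((x₂,r₂) : ℤ×ℤ) ∈ R → x₁ ≤ x₂ →
      r₂ ≤ r₁ → ((x₂,r₁) : ℤ×ℤ) ∈ R)
    {C D : ℤ × ℤ} (hC : C ∈ R) (hD : D ∈ R) (hcol : C.1 = D.1) (hCD : C.2 ≤ D.2) :
    ∀ n : ℕ, ∀ x₁ x₂ r₁ r₂ : ℤ, (C.1 - x₁).toNat ≤ n → x₁ ≤ x₂ → r₂ ≤ r₁ →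
    pathCount R (x₁,r₁) C * pathCount R (x₂,r₂) D ≤
      pathCount R (x₁,r₂) C * pathCount R (x₂,r₁) D := by
  intro n
  induction n with
  | zero =>
    intro x₁ x₂ r₁ r₂ hn hx12 hr
    rcases le_or_gt C.1 x₁ with hxC|hxlt
    · exact mul_pathCount_le_deg hconv hmeet hjoin hC hD hcol hCD x₁ x₂ r₁ r₂ hx12 hr hxC
    · exfalso; omega
  | succ n ih =>
    intro x₁ x₂ r₁ r₂ hn hx12 hr
    rcases eq_or_lt_of_le hr with rfl|hr'
    · exact le_rfl
    rcases le_or_gt C.1 x₁ with hxC|hxlt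
    · exact mul_pathCount_le_deg hconv hmeet hjoin hC hD hcol hCD x₁ x₂ r₁ r₂ hx12 hr hxC
    by_cases h1 : ((x₁,r₁) : ℤ×ℤ) ∈ R
    swap
    · rw [pathCount_eq_zero_of_notMem h1, zero_mul]; exact Nat.zero_le _
    by_cases h2 : ((x₂,r₂) : ℤ×ℤ) ∈ R
    swap
    · rw [pathCount_eq_zero_of_notMem h2, mul_zero]; exact Nat.zero_le _
    by_cases h3 : r₁ ≤ C.2
    swap
    · rw [pathCount_eq_zero_of_snd_lt (by simp; omega), zero_mul]; exact Nat.zero_le _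
    by_cases h4 : x₂ ≤ D.1
    swap
    · rw [pathCount_eq_zero_of_fst_lt (show D.1 < (x₂,r₂).1 by simp; omega), mul_zero]
      exact Nat.zero_le _
    have m1 : ((x₁,r₂) : ℤ×ℤ) ∈ R := hmeet _ _ _ _ h1 h2 hx12 hr
    have m2 : ((x₂,r₁) : ℤ×ℤ) ∈ R := hjoin _ _ _ _ h1 h2 hx12 hr
    have hr2C : r₂ ≤ C.2 := le_trans (le_of_lt hr') h3
    have hr1D : r₁ ≤ D.2 := le_trans h3 hCD
    have hr2D : r₂ ≤ D.2 := le_trans hr2C hCD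
    have e1 := pathCount_dec hconv C ((C.2 - r₁).toNat) x₁ r₁ le_rfl h1 hxlt h3
    have e2 := pathCount_dec hconv C ((C.2 - r₂).toNat) x₁ r₂ le_rfl m1 hxlt hr2C
    rcases eq_or_lt_of_le h4 with hx2D|hx2D
    · -- x₂ = D.1 : vertical paths on the D side
      have hDx : ((x₂, D.2) : ℤ×ℤ) ∈ R := by rw [hx2D]; exact hD
      have v2 : pathCount R (x₂,r₂) D = 1 :=
        pathCount_vert (by simp [hx2D]) (by simpa using hr2D)
          (fun ρ hρ1 hρ2 => hconv x₂ r₂ ρ D.2 h2 hDx hρ1 hρ2)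
      have v4 : pathCount R (x₂,r₁) D = 1 :=
        pathCount_vert (by simp [hx2D]) (by simpa using hr1D)
          (fun ρ hρ1 hρ2 => hconv x₂ r₁ ρ D.2 m2 hDx hρ1 hρ2)
      rw [v2, v4, mul_one, mul_one, e1, e2]
      exact Finset.sum_le_sum_of_subset (Finset.Icc_subset_Icc_left (le_of_lt hr'))
    · -- x₂ < D.1 : the cross-term computation
      have e3 := pathCount_dec hconv D ((D.2 - r₂).toNat) x₂ r₂ le_rfl h2 hx2D hr2D
      have e4 := pathCount_dec hconv D ((D.2 - r₁).toNat) x₂ r₁ le_rfl m2 hx2D hr1D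
      have hdisjC : Disjoint (Finset.Icc r₂ (r₁-1)) (Finset.Icc r₁ C.2) := by
        rw [Finset.disjoint_left]
        intro z hz1 hz2
        rw [Finset.mem_Icc] at hz1 hz2
        omega
      have hdisjD : Disjoint (Finset.Icc r₂ (r₁-1)) (Finset.Icc r₁ D.2) := by
        rw [Finset.disjoint_left]
        intro z hz1 hz2
        rw [Finset.mem_Icc] at hz1 hz2
        omega
      have hunC : Finset.Icc r₂ C.2 = Finset.Icc r₂ (r₁-1) ∪ Finset.Icc r₁ C.2 := by
        ext z; simp only [Finset.mem_Icc, Finset.mem_union]; omega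
      have hunD : Finset.Icc r₂ D.2 = Finset.Icc r₂ (r₁-1) ∪ Finset.Icc r₁ D.2 := by
        ext z; simp only [Finset.mem_Icc, Finset.mem_union]; omega
      have key : (∑ s ∈ Finset.Icc r₁ C.2,
            (if ((x₁,s) : ℤ×ℤ) ∈ R then pathCount R (x₁+1,s) C else 0)) *
          (∑ t ∈ Finset.Icc r₂ (r₁-1),
            (if ((x₂,t) : ℤ×ℤ) ∈ R then pathCount R (x₂+1,t) D else 0)) ≤
          (∑ s ∈ Finset.Icc r₂ (r₁-1),
            (if ((x₁,s) : ℤ×ℤ) ∈ R then pathCount R (x₁+1,s) C else 0)) *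
          (∑ t ∈ Finset.Icc r₁ D.2,
            (if ((x₂,t) : ℤ×ℤ) ∈ R then pathCount R (x₂+1,t) D else 0)) := by
        calc (∑ s ∈ Finset.Icc r₁ C.2,
              (if ((x₁,s) : ℤ×ℤ) ∈ R then pathCount R (x₁+1,s) C else 0)) *
            (∑ t ∈ Finset.Icc r₂ (r₁-1),
              (if ((x₂,t) : ℤ×ℤ) ∈ R then pathCount R (x₂+1,t) D else 0))
            = ∑ s ∈ Finset.Icc r₁ C.2, ∑ t ∈ Finset.Icc r₂ (r₁-1),
              (if ((x₁,s) : ℤ×ℤ) ∈ R then pathCount R (x₁+1,s) C else 0) *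
              (if ((x₂,t) : ℤ×ℤ) ∈ R then pathCount R (x₂+1,t) D else 0) :=
            Finset.sum_mul_sum _ _ _ _
          _ ≤ ∑ s ∈ Finset.Icc r₁ C.2, ∑ t ∈ Finset.Icc r₂ (r₁-1),
              (if ((x₁,t) : ℤ×ℤ) ∈ R then pathCount R (x₁+1,t) C else 0) *
              (if ((x₂,s) : ℤ×ℤ) ∈ R then pathCount R (x₂+1,s) D else 0) := by
            apply Finset.sum_le_sum
            intro s hs
            apply Finset.sum_le_sum
            intro t ht
            rw [Finset.mem_Icc] at hs ht
            by_cases i1 : ((x₁,s) : ℤ×ℤ) ∈ R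
            swap
            · rw [if_neg i1, zero_mul]; exact Nat.zero_le _
            by_cases i2 : ((x₂,t) : ℤ×ℤ) ∈ R
            swap
            · rw [if_neg i2, mul_zero]; exact Nat.zero_le _
            rw [if_pos i1, if_pos i2]
            by_cases z1 : pathCount R (x₁+1,s) C = 0
            · rw [z1, zero_mul]; exact Nat.zero_le _
            by_cases z2 : pathCount R (x₂+1,t) D = 0
            · rw [z2, mul_zero]; exact Nat.zero_le _
            have hts : t ≤ s := by omega
            have mt : ((x₁,t) : ℤ×ℤ) ∈ R := hmeet x₁ x₂ s t i1 i2 hx12 hts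
            have ms : ((x₂,s) : ℤ×ℤ) ∈ R := hjoin x₁ x₂ s t i1 i2 hx12 hts
            rw [if_pos mt, if_pos ms]
            exact ih (x₁+1) (x₂+1) s t (by omega) (by omega) hts
          _ = (∑ s ∈ Finset.Icc r₂ (r₁-1),
              (if ((x₁,s) : ℤ×ℤ) ∈ R then pathCount R (x₁+1,s) C else 0)) *
              (∑ t ∈ Finset.Icc r₁ C.2,
              (if ((x₂,t) : ℤ×ℤ) ∈ R then pathCount R (x₂+1,t) D else 0)) := by
            rw [Finset.sum_comm, ← Finset.sum_mul_sum]
          _ ≤ (∑ s ∈ Finset.Icc r₂ (r₁-1),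
              (if ((x₁,s) : ℤ×ℤ) ∈ R then pathCount R (x₁+1,s) C else 0)) *
              (∑ t ∈ Finset.Icc r₁ D.2,
              (if ((x₂,t) : ℤ×ℤ) ∈ R then pathCount R (x₂+1,t) D else 0)) :=
            Nat.mul_le_mul_left _
              (Finset.sum_le_sum_of_subset (Finset.Icc_subset_Icc_right hCD))
      rw [e1, e2, e3, e4, hunC, hunD, Finset.sum_union hdisjC, Finset.sum_union hdisjD,
        mul_add, add_mul]
      exact Nat.add_le_add_right key _

end Main

section Region

variable {a b : ℤ} {lower upper : ℕ → ℤ × ℤ}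

lemma low_witness (hlow : IsNEPath (0, 0) (a, b) lower) {x' r x : ℤ}
    (hv : ((x', r) : ℤ×ℤ) ∈ staircaseRegion (steps (0, 0) (a, b)) lower upper)
    (hx : x ≤ x') (hx0 : 0 ≤ x) :
    ∃ t ≤ steps (0, 0) (a, b), (lower t).1 = x ∧ (lower t).2 ≤ r := by
  obtain ⟨⟨t', ht', hcol, hrow⟩, -⟩ := hv
  have hcol' : (lower t').1 = x' := hcol
  have h0 : (lower 0).1 = 0 := by rw [hlow.1]
  have hb0 : (lower 0).1 ≤ x := by rw [h0]; exact hx0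
  have hb1 : x ≤ (lower t').1 := by rw [hcol']; exact hx
  obtain ⟨t, h0t, htt', hxt⟩ :=
    int_ivt (f := fun t => (lower t).1) (fst_mono hlow) (fst_succ_le hlow)
      (Nat.zero_le t') hb0 hb1
  exact ⟨t, le_trans htt' ht', hxt, le_trans (snd_mono hlow htt') hrow⟩

lemma up_witness (hup : IsNEPath (0, 0) (a, b) upper) {x' r x : ℤ}
    (hv : ((x', r) : ℤ×ℤ) ∈ staircaseRegion (steps (0, 0) (a, b)) lower upper)
    (hx : x' ≤ x) (hxa : x ≤ a) :
    ∃ t ≤ steps (0, 0) (a, b), (upper t).1 = x ∧ r ≤ (upper t).2 := by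
  obtain ⟨-, ⟨t', ht', hcol, hrow⟩⟩ := hv
  have hcol' : (upper t').1 = x' := hcol
  have hend : upper (steps (0, 0) (a, b)) = (a, b) := path_end hup
  have hb0 : (upper t').1 ≤ x := by rw [hcol']; exact hx
  have hb1 : x ≤ (upper (steps (0, 0) (a, b))).1 := by rw [hend]; exact hxa
  obtain ⟨t, ht't, htn, hxt⟩ :=
    int_ivt (f := fun t => (upper t).1) (fst_mono hup) (fst_succ_le hup)
      (t₀ := t') ht' hb0 hb1
  exact ⟨t, htn, hxt, le_trans hrow (snd_mono hup ht't)⟩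

lemma mem_x_nonneg (hlow : IsNEPath (0, 0) (a, b) lower) {x r : ℤ}
    (hv : ((x, r) : ℤ×ℤ) ∈ staircaseRegion (steps (0, 0) (a, b)) lower upper) :
    0 ≤ x := by
  obtain ⟨⟨t, ht, hcol, -⟩, -⟩ := hv
  have hcol' : (lower t).1 = x := hcol
  rw [← hcol']
  simpa [hlow.1] using start_fst_le hlow t

lemma mem_x_le (hup : IsNEPath (0, 0) (a, b) upper) {x r : ℤ}
    (hv : ((x, r) : ℤ×ℤ) ∈ staircaseRegion (steps (0, 0) (a, b)) lower upper) :
    x ≤ a := by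
  obtain ⟨-, ⟨t, ht, hcol, -⟩⟩ := hv
  have hcol' : (upper t).1 = x := hcol
  rw [← hcol']
  have h : (upper t).1 ≤ (upper (steps (0, 0) (a, b))).1 := fst_mono hup ht
  rw [path_end hup] at h
  exact h

end Region


/-- Lemma 6.4(a): horizontal variant of the path-switching inequality in a
staircase region. -/
theorem lattice_path_horizontal {a b : ℤ} (lower upper : ℕ → ℤ × ℤ)
    (hlow : IsNEPath (0, 0) (a, b) lower) (hup : IsNEPath (0, 0) (a, b) upper)
    (R : Set (ℤ × ℤ)) (hR : R = staircaseRegion (steps (0, 0) (a, b)) lower upper)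
    (hlR : ∀ t, lower t ∈ R) (huR : ∀ t, upper t ∈ R)
    (A B C D : ℤ × ℤ) (hA : A ∈ R) (hB : B ∈ R) (hC : C ∈ R) (hD : D ∈ R)
    (hABrow : A.2 = B.2) (hABle : A.1 ≤ B.1)
    (hCDcol : C.1 = D.1) (hCup : A.2 ≤ C.2) (hDup : A.2 ≤ D.2) (hCDle : C.2 ≤ D.2)
    (hgap : A.1 < B.1) :
    pathCount R A C * pathCount R B D ≤
      pathCount R (A + (1, 0)) C * pathCount R (B - (1, 0)) D := by
  classical
  subst hR
  set S := staircaseRegion (steps (0, 0) (a, b)) lower upper with hS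
  -- convexity and lattice properties of the staircase region
  have hconv : ∀ x r ρ s : ℤ, ((x,r) : ℤ×ℤ) ∈ S → ((x,s) : ℤ×ℤ) ∈ S → r ≤ ρ → ρ ≤ s →
      ((x,ρ) : ℤ×ℤ) ∈ S := by
    intro x r ρ s h1 h2 hle1 hle2
    constructor
    · obtain ⟨t, ht, hc, hr'⟩ := h1.1
      exact ⟨t, ht, hc, le_trans hr' hle1⟩
    · obtain ⟨t, ht, hc, hr'⟩ := h2.2
      exact ⟨t, ht, hc, le_trans hle2 hr'⟩
  have hmeet : ∀ x₁ x₂ r₁ r₂ : ℤ, ((x₁,r₁) : ℤ×ℤ) ∈ S → ((x₂,r₂) : ℤ×ℤ) ∈ S → x₁ ≤ x₂ →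
      r₂ ≤ r₁ → ((x₁,r₂) : ℤ×ℤ) ∈ S := by
    intro x₁ x₂ r₁ r₂ h1 h2 hle hr
    constructor
    · exact low_witness hlow h2 hle (mem_x_nonneg hlow h1)
    · obtain ⟨t, ht, hc, hr'⟩ := h1.2
      exact ⟨t, ht, hc, le_trans hr hr'⟩
  have hjoin : ∀ x₁ x₂ r₁ r₂ : ℤ, ((x₁,r₁) : ℤ×ℤ) ∈ S → ((x₂,r₂) : ℤ×ℤ) ∈ S → x₁ ≤ x₂ →
      r₂ ≤ r₁ → ((x₂,r₁) : ℤ×ℤ) ∈ S := by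
    intro x₁ x₂ r₁ r₂ h1 h2 hle hr
    constructor
    · obtain ⟨t, ht, hc, hr'⟩ := h2.1
      exact ⟨t, ht, hc, le_trans hr' hr⟩
    · exact up_witness hup h1 hle (mem_x_le hup h2)
  have hrow : ∀ x₁ x₂ x₃ s : ℤ, ((x₁,s) : ℤ×ℤ) ∈ S → ((x₃,s) : ℤ×ℤ) ∈ S → x₁ ≤ x₂ →
      x₂ ≤ x₃ → ((x₂,s) : ℤ×ℤ) ∈ S := by
    intro x₁ x₂ x₃ s h1 h3 h12 h23
    constructor
    · exact low_witness hlow h3 h23 (le_trans (mem_x_nonneg hlow h1) h12)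
    · exact up_witness hup h1 h12 (le_trans h23 (mem_x_le hup h3))
  -- degenerate case B.1 > D.1
  rcases le_or_gt B.1 D.1 with hbd|hbd
  swap
  · rw [pathCount_eq_zero_of_fst_lt hbd, mul_zero]
    exact Nat.zero_le _
  have hA1C : A.1 < C.1 := by omega
  -- membership facts
  have hA' : ((A.1, A.2) : ℤ×ℤ) ∈ S := hA
  have hB' : ((B.1, A.2) : ℤ×ℤ) ∈ S := by rw [hABrow]; exact hB
  have hBm1 : ((B.1 - 1, A.2) : ℤ×ℤ) ∈ S := hrow A.1 (B.1-1) B.1 A.2 hA' hB' (by omega) (by omega)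
  -- decompositions
  have decA := pathCount_dec hconv C ((C.2 - A.2).toNat) A.1 A.2 le_rfl hA' hA1C hCup
  have decB := pathCount_dec hconv D ((D.2 - A.2).toNat) (B.1 - 1) A.2 le_rfl hBm1
    (by omega) hDup
  simp only [sub_add_cancel] at decB
  have h5 : A + ((1:ℤ), (0:ℤ)) = ((A.1 + 1, A.2) : ℤ×ℤ) :=
    Prod.ext (by simp) (by simp)
  have h6 : B - ((1:ℤ), (0:ℤ)) = ((B.1 - 1, A.2) : ℤ×ℤ) :=
    Prod.ext (by simp) (by simp [hABrow.symm])
  have hADef : pathCount S A C = pathCount S (A.1, A.2) C := rfl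
  have hKB : pathCount S B D = pathCount S (B.1, A.2) D := by rw [hABrow]
  rw [h5, h6, hADef, hKB, decA, decB]
  calc (∑ s ∈ Finset.Icc A.2 C.2,
        (if ((A.1, s) : ℤ×ℤ) ∈ S then pathCount S (A.1+1, s) C else 0)) *
      pathCount S (B.1, A.2) D
      = ∑ s ∈ Finset.Icc A.2 C.2,
        (if ((A.1, s) : ℤ×ℤ) ∈ S then pathCount S (A.1+1, s) C else 0) *
          pathCount S (B.1, A.2) D := Finset.sum_mul _ _ _
    _ ≤ ∑ s ∈ Finset.Icc A.2 C.2, pathCount S (A.1+1, A.2) C *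
        (if ((B.1 - 1, s) : ℤ×ℤ) ∈ S then pathCount S (B.1, s) D else 0) := by
      apply Finset.sum_le_sum
      intro s hs
      rw [Finset.mem_Icc] at hs
      by_cases ia : ((A.1, s) : ℤ×ℤ) ∈ S
      swap
      · rw [if_neg ia, zero_mul]; exact Nat.zero_le _
      rw [if_pos ia]
      have hM := mul_pathCount_le hconv hmeet hjoin hC hD hCDcol hCDle
        ((C.1 - (A.1+1)).toNat) (A.1+1) B.1 s A.2 le_rfl (by omega) hs.1
      by_cases ib : ((B.1 - 1, s) : ℤ×ℤ) ∈ S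
      · rw [if_pos ib]; exact hM
      · rw [if_neg ib]
        have hz : pathCount S (B.1, s) D = 0 := by
          by_contra hnz
          exact ib (hrow A.1 (B.1-1) B.1 s ia (mem_of_pathCount_ne_zero hnz)
            (by omega) (by omega))
        rw [hz, mul_zero] at hM
        rw [mul_zero]
        exact hM
    _ = pathCount S (A.1+1, A.2) C * ∑ s ∈ Finset.Icc A.2 C.2,
        (if ((B.1 - 1, s) : ℤ×ℤ) ∈ S then pathCount S (B.1, s) D else 0) :=
      (Finset.mul_sum _ _ _).symm
    _ ≤ pathCount S (A.1+1, A.2) C * ∑ t ∈ Finset.Icc A.2 D.2,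
        (if ((B.1 - 1, t) : ℤ×ℤ) ∈ S then pathCount S (B.1, t) D else 0) :=
      Nat.mul_le_mul_left _
        (Finset.sum_le_sum_of_subset (Finset.Icc_subset_Icc_right hCDle))
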